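/- The Gödel spacetime is not Ricci-pseudosymmetric: at every point of ℝ⁴ the (0,4)-tensors R·S and Q(g,S) are linearly independent; in particular there is no real number L with R·S = L·Q(g,S) at any point. -/

import Mathlib

noncomputable section

open scoped BigOperators

/-- A point of `ℝⁿ`. -/
abbrev Pt (n : ℕ) := Fin n → ℝ
/-- A (0,2)-tensor field on `ℝⁿ`, given by its components. -/
abbrev Ten2 (n : ℕ) := Pt n → Fin n → Fin n → ℝ
/-- A (0,4)-tensor field on `ℝⁿ`, given by its components. -/
abbrev Ten4 (n : ℕ) := Pt n → Fin n → Fin n → Fin n → Fin n → ℝ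

variable {n : ℕ}

/-- Partial derivative `∂ᵢ f` at `x`. -/
def pderiv (i : Fin n) (f : Pt n → ℝ) (x : Pt n) : ℝ :=
  fderiv ℝ f x (Pi.single i 1)

/-- Components `g^{ij}` of the inverse of the metric. -/
def ginv (g : Ten2 n) (x : Pt n) (i j : Fin n) : ℝ :=
  (Matrix.of (g x))⁻¹ i j

/-- Christoffel symbols of the second kind, `Γ^h_{ij}` as a function of the point. -/
def christoffel (g : Ten2 n) (h i j : Fin n) (x : Pt n) : ℝ :=
  (1/2) * ∑ l, ginv g x h l *
    (pderiv i (fun y => g y l j) x + pderiv j (fun y => g y i l) x - pderiv l (fun y => g y i j) x)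

/-- Curvature components `R^h_{ijk}`. -/
def curvUp (g : Ten2 n) (h i j k : Fin n) (x : Pt n) : ℝ :=
  pderiv j (christoffel g h i k) x - pderiv k (christoffel g h i j) x
    + ∑ l, christoffel g h j l x * christoffel g l i k x
    - ∑ l, christoffel g h k l x * christoffel g l i j x

/-- The (0,4) Riemann–Christoffel curvature tensor `R_{hijk} = g_{hl} R^l_{ijk}`. -/
def riemann (g : Ten2 n) : Ten4 n := fun x h i j k => ∑ l, g x h l * curvUp g l i j k x

/-- The Ricci tensor `S_{ij} = R^k_{ikj}`. -/
def ricci (g : Ten2 n) : Ten2 n := fun x i j => ∑ k, curvUp g k i k j x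

/-- The scalar curvature `κ = g^{ij} S_{ij}`. -/
def scalarCurv (g : Ten2 n) (x : Pt n) : ℝ := ∑ i, ∑ j, ginv g x i j * ricci g x i j

/-- Components `S_{ij,k}` of the covariant derivative of the Ricci tensor. -/
def ricciCov (g : Ten2 n) (x : Pt n) (i j k : Fin n) : ℝ :=
  pderiv k (fun y => ricci g y i j) x
    - ∑ l, christoffel g l k i x * ricci g x l j
    - ∑ l, christoffel g l k j x * ricci g x i l

/-- The Kulkarni–Nomizu product of two symmetric (0,2)-tensors. -/
def kn (A B : Ten2 n) : Ten4 n := fun x X1 X2 X3 X4 =>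
  A x X1 X4 * B x X2 X3 + A x X2 X3 * B x X1 X4 - A x X1 X3 * B x X2 X4 - A x X2 X4 * B x X1 X3

/-- The Gaussian curvature tensor `G = (1/2) g ∧ g`. -/
def Gten (g : Ten2 n) : Ten4 n := fun x i j k l => (1/2) * kn g g x i j k l

/-- The Weyl conformal curvature tensor
`C = R − (1/(n−2)) g∧S + (κ/((n−2)(n−1))) G`. -/
def weyl (g : Ten2 n) : Ten4 n := fun x h i j k =>
  riemann g x h i j k - (1/((n:ℝ)-2)) * kn g (ricci g) x h i j k
    + (scalarCurv g x / (((n:ℝ)-2)*((n:ℝ)-1))) * Gten g x h i j k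

/-- The conharmonic curvature tensor `conh(R) = R − (1/(n−2)) g∧S`. -/
def conh (g : Ten2 n) : Ten4 n := fun x h i j k =>
  riemann g x h i j k - (1/((n:ℝ)-2)) * kn g (ricci g) x h i j k

/-- The concircular curvature tensor `K = R − (κ/(n(n−1))) G`. -/
def concirc (g : Ten2 n) : Ten4 n := fun x h i j k =>
  riemann g x h i j k - (scalarCurv g x / ((n:ℝ)*((n:ℝ)-1))) * Gten g x h i j k

/-- The (0,6)-tensor `T·T'` for (0,4)-tensors `T, T'`: the curvature-type tensor `T`
acts as a derivation (through the endomorphisms `𝒯(X,Y)` with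
`g(𝒯(X,Y)Z,W) = T(X,Y,Z,W)`) on the (0,4)-tensor `T'`. -/
def dot44 (g : Ten2 n) (T T' : Ten4 n) :
    Pt n → Fin n → Fin n → Fin n → Fin n → Fin n → Fin n → ℝ :=
  fun x h i j k l m =>
  -(∑ r, ∑ s, ginv g x r s *
    (T x l m h s * T' x r i j k + T x l m i s * T' x h r j k
      + T x l m j s * T' x h i r k + T x l m k s * T' x h i j r))

/-- The (0,4)-tensor `T·A` for a (0,4)-tensor `T` acting on a (0,2)-tensor `A`. -/
def dot42 (g : Ten2 n) (T : Ten4 n) (A : Ten2 n) :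
    Pt n → Fin n → Fin n → Fin n → Fin n → ℝ :=
  fun x i j l m =>
  -(∑ r, ∑ s, ginv g x r s * (T x l m i s * A x r j + T x l m j s * A x i r))

/-- The Tachibana tensor `Q(A,T')` of a symmetric (0,2)-tensor `A`
and a (0,4)-tensor `T'`, built from the endomorphisms `X ∧_A Y`. -/
def tach4 (A : Ten2 n) (T' : Ten4 n) :
    Pt n → Fin n → Fin n → Fin n → Fin n → Fin n → Fin n → ℝ :=
  fun x h i j k l m =>
  -((A x m h * T' x l i j k - A x l h * T' x m i j k)
    + (A x m i * T' x h l j k - A x l i * T' x h m j k)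
    + (A x m j * T' x h i l k - A x l j * T' x h i m k)
    + (A x m k * T' x h i j l - A x l k * T' x h i j m))

/-- The Tachibana tensor `Q(A,B)` of a symmetric (0,2)-tensor `A`
and a (0,2)-tensor `B`. -/
def tach2 (A B : Ten2 n) : Pt n → Fin n → Fin n → Fin n → Fin n → ℝ :=
  fun x i j l m =>
  -((A x m i * B x l j - A x l i * B x m j) + (A x m j * B x i l - A x l j * B x i m))

/-- The Gödel metric on `ℝ⁴`: `g₁₁ = −a²`, `g₂₂ = (a²/2)e^{2x¹}`, `g₃₃ = −a²`,
`g₄₄ = a²`, `g₂₄ = g₄₂ = a²e^{x¹}`, all other components zero. -/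
def godel (a : ℝ) : Ten2 4 := fun x i j =>
  ![![-a^2, 0, 0, 0],
    ![0, a^2/2 * Real.exp (2 * x 0), 0, a^2 * Real.exp (x 0)],
    ![0, 0, -a^2, 0],
    ![0, a^2 * Real.exp (x 0), 0, a^2]] i j

namespace GodelAux

lemma pderiv_const' {n : ℕ} (c : ℝ) (i : Fin n) (x : Pt n) :
    pderiv i (fun _ => c) x = 0 := by
  simp [pderiv]

lemma hasFDerivAt_cexp (c k : ℝ) (x : Pt 4) :
    HasFDerivAt (fun y : Pt 4 => c * Real.exp (k * y 0))
      ((c * k * Real.exp (k * x 0)) • (ContinuousLinearMap.proj 0 : (Fin 4 → ℝ) →L[ℝ] ℝ)) x := by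
  have h0 : HasFDerivAt (fun y : Pt 4 => y 0)
      (ContinuousLinearMap.proj 0 : (Fin 4 → ℝ) →L[ℝ] ℝ) x :=
    (ContinuousLinearMap.proj 0 : (Fin 4 → ℝ) →L[ℝ] ℝ).hasFDerivAt
  have h1 := ((h0.const_mul k).exp).const_mul c
  have e : (c * k * Real.exp (k * x 0)) • (ContinuousLinearMap.proj 0 : (Fin 4 → ℝ) →L[ℝ] ℝ) = c • Real.exp (k * x 0) • k • (ContinuousLinearMap.proj 0 : (Fin 4 → ℝ) →L[ℝ] ℝ) := by
    ext v
    simp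
    ring
  rw [e]
  exact h1

lemma pderiv_cexp (c k : ℝ) (i : Fin 4) (x : Pt 4) :
    pderiv i (fun y : Pt 4 => c * Real.exp (k * y 0)) x
      = c * k * Real.exp (k * x 0) * (Pi.single i (1:ℝ) : Fin 4 → ℝ) 0 := by
  rw [pderiv, (hasFDerivAt_cexp c k x).fderiv]
  simp [mul_comm]

lemma pderiv_cexp1 (c : ℝ) (i : Fin 4) (x : Pt 4) :
    pderiv i (fun y : Pt 4 => c * Real.exp (y 0)) x
      = c * Real.exp (x 0) * (Pi.single i (1:ℝ) : Fin 4 → ℝ) 0 := by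
  have h : (fun y : Pt 4 => c * Real.exp (y 0)) = fun y : Pt 4 => c * Real.exp (1 * y 0) := by
    funext y; rw [one_mul]
  rw [h, pderiv_cexp]
  simp

/-- The explicit inverse of the Gödel metric. -/
def Gi (a : ℝ) (x : Pt 4) : Matrix (Fin 4) (Fin 4) ℝ :=
  Matrix.of ![![-(1/a^2), 0, 0, 0],
    ![0, -2/a^2 * Real.exp (-(2 * x 0)), 0, 2/a^2 * Real.exp (-(x 0))],
    ![0, 0, -(1/a^2), 0],
    ![0, 2/a^2 * Real.exp (-(x 0)), 0, -(1/a^2)]]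

lemma ginv_godel (a : ℝ) (ha : 0 < a) (x : Pt 4) (i j : Fin 4) :
    ginv (godel a) x i j = Gi a x i j := by
  have he1 : Real.exp (-(x 0)) = (Real.exp (x 0))⁻¹ := Real.exp_neg _
  have he2 : Real.exp (2 * x 0) = Real.exp (x 0) ^ 2 := by
    rw [two_mul, Real.exp_add]; ring
  have he3 : Real.exp (-(2 * x 0)) = (Real.exp (x 0) ^ 2)⁻¹ := by
    rw [Real.exp_neg, he2]
  have key : (Matrix.of (godel a x))⁻¹ = Gi a x := by
    apply Matrix.inv_eq_right_inv
    ext i j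
    fin_cases i <;> fin_cases j <;>
      simp [Matrix.mul_apply, Fin.sum_univ_four, godel, Gi, Matrix.one_apply,
        Matrix.vecHead, Matrix.vecTail, he1, he2, he3] <;>
      field_simp <;> ring
  rw [ginv, key]

def cG : Fin 4 → Fin 4 → Fin 4 → ℝ :=
  ![![![(0), (0), (0), (0)],
    ![(0), (1/2), (0), (1/2)],
    ![(0), (0), (0), (0)],
    ![(0), (1/2), (0), (0)]],
  ![![(0), (0), (0), (-1)],
    ![(0), (0), (0), (0)],
    ![(0), (0), (0), (0)],
    ![(-1), (0), (0), (0)]],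
  ![![(0), (0), (0), (0)],
    ![(0), (0), (0), (0)],
    ![(0), (0), (0), (0)],
    ![(0), (0), (0), (0)]],
  ![![(0), (1/2), (0), (1)],
    ![(1/2), (0), (0), (0)],
    ![(0), (0), (0), (0)],
    ![(1), (0), (0), (0)]]]

def kG : Fin 4 → Fin 4 → Fin 4 → ℝ :=
  ![![![(0), (0), (0), (0)],
    ![(0), (2), (0), (1)],
    ![(0), (0), (0), (0)],
    ![(0), (1), (0), (0)]],
  ![![(0), (0), (0), (-1)],
    ![(0), (0), (0), (0)],
    ![(0), (0), (0), (0)],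
    ![(-1), (0), (0), (0)]],
  ![![(0), (0), (0), (0)],
    ![(0), (0), (0), (0)],
    ![(0), (0), (0), (0)],
    ![(0), (0), (0), (0)]],
  ![![(0), (1), (0), (0)],
    ![(1), (0), (0), (0)],
    ![(0), (0), (0), (0)],
    ![(0), (0), (0), (0)]]]

def cC : Fin 4 → Fin 4 → Fin 4 → Fin 4 → ℝ :=
  ![![![![(0), (0), (0), (0)], ![(0), (0), (0), (0)], ![(0), (0), (0), (0)], ![(0), (0), (0), (0)]],
   ![![(0), (3/4), (0), (1/2)], ![(-3/4), (0), (0), (0)], ![(0), (0), (0), (0)], ![(-1/2), (0), (0), (0)]],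
   ![![(0), (0), (0), (0)], ![(0), (0), (0), (0)], ![(0), (0), (0), (0)], ![(0), (0), (0), (0)]],
   ![![(0), (1/2), (0), (1/2)], ![(-1/2), (0), (0), (0)], ![(0), (0), (0), (0)], ![(-1/2), (0), (0), (0)]]],
  ![![![(0), (-1/2), (0), (0)], ![(1/2), (0), (0), (0)], ![(0), (0), (0), (0)], ![(0), (0), (0), (0)]],
   ![![(0), (0), (0), (0)], ![(0), (0), (0), (1/2)], ![(0), (0), (0), (0)], ![(0), (-1/2), (0), (0)]],
   ![![(0), (0), (0), (0)], ![(0), (0), (0), (0)], ![(0), (0), (0), (0)], ![(0), (0), (0), (0)]],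
   ![![(0), (0), (0), (0)], ![(0), (0), (0), (1/2)], ![(0), (0), (0), (0)], ![(0), (-1/2), (0), (0)]]],
  ![![![(0), (0), (0), (0)], ![(0), (0), (0), (0)], ![(0), (0), (0), (0)], ![(0), (0), (0), (0)]],
   ![![(0), (0), (0), (0)], ![(0), (0), (0), (0)], ![(0), (0), (0), (0)], ![(0), (0), (0), (0)]],
   ![![(0), (0), (0), (0)], ![(0), (0), (0), (0)], ![(0), (0), (0), (0)], ![(0), (0), (0), (0)]],
   ![![(0), (0), (0), (0)], ![(0), (0), (0), (0)], ![(0), (0), (0), (0)], ![(0), (0), (0), (0)]]],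
  ![![![(0), (1), (0), (1/2)], ![(-1), (0), (0), (0)], ![(0), (0), (0), (0)], ![(-1/2), (0), (0), (0)]],
   ![![(0), (0), (0), (0)], ![(0), (0), (0), (-1/4)], ![(0), (0), (0), (0)], ![(0), (1/4), (0), (0)]],
   ![![(0), (0), (0), (0)], ![(0), (0), (0), (0)], ![(0), (0), (0), (0)], ![(0), (0), (0), (0)]],
   ![![(0), (0), (0), (0)], ![(0), (0), (0), (-1/2)], ![(0), (0), (0), (0)], ![(0), (1/2), (0), (0)]]]]

def kC : Fin 4 → Fin 4 → Fin 4 → Fin 4 → ℝ :=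
  ![![![![(0), (0), (0), (0)], ![(0), (0), (0), (0)], ![(0), (0), (0), (0)], ![(0), (0), (0), (0)]],
   ![![(0), (2), (0), (1)], ![(2), (0), (0), (0)], ![(0), (0), (0), (0)], ![(1), (0), (0), (0)]],
   ![![(0), (0), (0), (0)], ![(0), (0), (0), (0)], ![(0), (0), (0), (0)], ![(0), (0), (0), (0)]],
   ![![(0), (1), (0), (0)], ![(1), (0), (0), (0)], ![(0), (0), (0), (0)], ![(0), (0), (0), (0)]]],
  ![![![(0), (0), (0), (0)], ![(0), (0), (0), (0)], ![(0), (0), (0), (0)], ![(0), (0), (0), (0)]],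
   ![![(0), (0), (0), (0)], ![(0), (0), (0), (1)], ![(0), (0), (0), (0)], ![(0), (1), (0), (0)]],
   ![![(0), (0), (0), (0)], ![(0), (0), (0), (0)], ![(0), (0), (0), (0)], ![(0), (0), (0), (0)]],
   ![![(0), (0), (0), (0)], ![(0), (0), (0), (0)], ![(0), (0), (0), (0)], ![(0), (0), (0), (0)]]],
  ![![![(0), (0), (0), (0)], ![(0), (0), (0), (0)], ![(0), (0), (0), (0)], ![(0), (0), (0), (0)]],
   ![![(0), (0), (0), (0)], ![(0), (0), (0), (0)], ![(0), (0), (0), (0)], ![(0), (0), (0), (0)]],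
   ![![(0), (0), (0), (0)], ![(0), (0), (0), (0)], ![(0), (0), (0), (0)], ![(0), (0), (0), (0)]],
   ![![(0), (0), (0), (0)], ![(0), (0), (0), (0)], ![(0), (0), (0), (0)], ![(0), (0), (0), (0)]]],
  ![![![(0), (1), (0), (0)], ![(1), (0), (0), (0)], ![(0), (0), (0), (0)], ![(0), (0), (0), (0)]],
   ![![(0), (0), (0), (0)], ![(0), (0), (0), (2)], ![(0), (0), (0), (0)], ![(0), (2), (0), (0)]],
   ![![(0), (0), (0), (0)], ![(0), (0), (0), (0)], ![(0), (0), (0), (0)], ![(0), (0), (0), (0)]],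
   ![![(0), (0), (0), (0)], ![(0), (0), (0), (1)], ![(0), (0), (0), (0)], ![(0), (1), (0), (0)]]]]


lemma sing00 : (Pi.single (0:Fin 4) (1:ℝ) : Fin 4 → ℝ) 0 = 1 := by simp
lemma sing10 : (Pi.single (1:Fin 4) (1:ℝ) : Fin 4 → ℝ) 0 = 0 := by simp [Pi.single_apply]
lemma sing20 : (Pi.single (2:Fin 4) (1:ℝ) : Fin 4 → ℝ) 0 = 0 := by simp [Pi.single_apply]
lemma sing30 : (Pi.single (3:Fin 4) (1:ℝ) : Fin 4 → ℝ) 0 = 0 := by simp [Pi.single_apply]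

set_option maxHeartbeats 2000000 in
lemma christoffel_godel (a : ℝ) (ha : 0 < a) (h i j : Fin 4) :
    christoffel (godel a) h i j = fun x => cG h i j * Real.exp (kG h i j * x 0) := by
  fin_cases h <;> fin_cases i <;> fin_cases j <;>
    (funext x;
     (try simp [christoffel, ginv_godel a ha, Gi, godel, Fin.sum_univ_four]);
     (try simp only [pderiv_cexp, pderiv_cexp1, pderiv_const', sing00, sing10, sing20, sing30]);
     (try simp [cG, kG, Real.exp_neg, mul_comm, Matrix.vecHead, Matrix.vecTail,
        (by rw [two_mul, Real.exp_add]; ring : Real.exp (2 * x 0) = Real.exp (x 0) ^ 2)]);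
     (try field_simp);
     (try ring))

set_option maxHeartbeats 4000000 in
lemma curv_godel0 (a : ℝ) (ha : 0 < a) (i j k : Fin 4) (x : Pt 4) :
    curvUp (godel a) 0 i j k x = cC 0 i j k * Real.exp (kC 0 i j k * x 0) := by
  fin_cases i <;> fin_cases j <;> fin_cases k <;>
    ((try simp only [curvUp, christoffel_godel a ha, Fin.sum_univ_four]);
     (try simp only [pderiv_cexp, sing00, sing10, sing20, sing30]);
     (try simp [cG, kG, cC, kC, Real.exp_neg, Matrix.vecHead, Matrix.vecTail,
        (by rw [two_mul, Real.exp_add]; ring : Real.exp (2 * x 0) = Real.exp (x 0) ^ 2)]);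
     (try field_simp);
     (try ring))


set_option maxHeartbeats 4000000 in
lemma curv_godel1 (a : ℝ) (ha : 0 < a) (i j k : Fin 4) (x : Pt 4) :
    curvUp (godel a) 1 i j k x = cC 1 i j k * Real.exp (kC 1 i j k * x 0) := by
  fin_cases i <;> fin_cases j <;> fin_cases k <;>
    ((try simp only [curvUp, christoffel_godel a ha, Fin.sum_univ_four]);
     (try simp only [pderiv_cexp, sing00, sing10, sing20, sing30]);
     (try simp [cG, kG, cC, kC, Real.exp_neg, Matrix.vecHead, Matrix.vecTail,
        (by rw [two_mul, Real.exp_add]; ring : Real.exp (2 * x 0) = Real.exp (x 0) ^ 2)]);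
     (try field_simp);
     (try ring))

set_option maxHeartbeats 4000000 in
lemma curv_godel2 (a : ℝ) (ha : 0 < a) (i j k : Fin 4) (x : Pt 4) :
    curvUp (godel a) 2 i j k x = cC 2 i j k * Real.exp (kC 2 i j k * x 0) := by
  fin_cases i <;> fin_cases j <;> fin_cases k <;>
    ((try simp only [curvUp, christoffel_godel a ha, Fin.sum_univ_four]);
     (try simp only [pderiv_cexp, sing00, sing10, sing20, sing30]);
     (try simp [cG, kG, cC, kC, Real.exp_neg, Matrix.vecHead, Matrix.vecTail,
        (by rw [two_mul, Real.exp_add]; ring : Real.exp (2 * x 0) = Real.exp (x 0) ^ 2)]);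
     (try field_simp);
     (try ring))

set_option maxHeartbeats 4000000 in
lemma curv_godel3 (a : ℝ) (ha : 0 < a) (i j k : Fin 4) (x : Pt 4) :
    curvUp (godel a) 3 i j k x = cC 3 i j k * Real.exp (kC 3 i j k * x 0) := by
  fin_cases i <;> fin_cases j <;> fin_cases k <;>
    ((try simp only [curvUp, christoffel_godel a ha, Fin.sum_univ_four]);
     (try simp only [pderiv_cexp, sing00, sing10, sing20, sing30]);
     (try simp [cG, kG, cC, kC, Real.exp_neg, Matrix.vecHead, Matrix.vecTail,
        (by rw [two_mul, Real.exp_add]; ring : Real.exp (2 * x 0) = Real.exp (x 0) ^ 2)]);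
     (try field_simp);
     (try ring))

lemma curv_godel (a : ℝ) (ha : 0 < a) (h i j k : Fin 4) (x : Pt 4) :
    curvUp (godel a) h i j k x = cC h i j k * Real.exp (kC h i j k * x 0) := by
  fin_cases h
  · exact curv_godel0 a ha i j k x
  · exact curv_godel1 a ha i j k x
  · exact curv_godel2 a ha i j k x
  · exact curv_godel3 a ha i j k x

/-- Ricci tensor components. -/
def cS : Fin 4 → Fin 4 → ℝ := ![![0,0,0,0],![0,1,0,1],![0,0,0,0],![0,1,0,1]]
def kS : Fin 4 → Fin 4 → ℝ := ![![0,0,0,0],![0,2,0,1],![0,0,0,0],![0,1,0,0]]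

set_option maxHeartbeats 1000000 in
lemma ricci_godel (a : ℝ) (ha : 0 < a) (i j : Fin 4) (x : Pt 4) :
    ricci (godel a) x i j = cS i j * Real.exp (kS i j * x 0) := by
  fin_cases i <;> fin_cases j <;>
    ((try simp [ricci, curv_godel a ha, Fin.sum_univ_four, cC, kC, cS, kS, Real.exp_neg,
        Matrix.vecHead, Matrix.vecTail,
        (by rw [two_mul, Real.exp_add]; ring : Real.exp (2 * x 0) = Real.exp (x 0) ^ 2)]);
     (try ring))

set_option maxHeartbeats 2000000 in
lemma D0101 (a : ℝ) (ha : 0 < a) (x : Pt 4) :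
    dot42 (godel a) (riemann (godel a)) (ricci (godel a)) x 0 1 0 1
      = Real.exp (x 0) ^ 2 / 2 := by
  simp only [dot42, riemann, Fin.sum_univ_four]
  simp [ginv_godel a ha, Gi, godel, curv_godel a ha, ricci_godel a ha,
    cC, kC, cS, kS, Real.exp_neg, Matrix.vecHead, Matrix.vecTail,
    (by rw [two_mul, Real.exp_add]; ring : Real.exp (2 * x 0) = Real.exp (x 0) ^ 2)]
  field_simp
  ring

set_option maxHeartbeats 2000000 in
lemma D1212 (a : ℝ) (ha : 0 < a) (x : Pt 4) :
    dot42 (godel a) (riemann (godel a)) (ricci (godel a)) x 1 2 1 2 = 0 := by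
  simp only [dot42, riemann, Fin.sum_univ_four]
  simp [ginv_godel a ha, Gi, godel, curv_godel a ha, ricci_godel a ha,
    cC, kC, cS, kS, Real.exp_neg, Matrix.vecHead, Matrix.vecTail,
    (by rw [two_mul, Real.exp_add]; ring : Real.exp (2 * x 0) = Real.exp (x 0) ^ 2)]
  try field_simp
  try ring

lemma T0101 (a : ℝ) (ha : 0 < a) (x : Pt 4) :
    tach2 (godel a) (ricci (godel a)) x 0 1 0 1 = -(a^2 * Real.exp (x 0) ^ 2) := by
  simp [tach2, godel, ricci_godel a ha, cS, kS, Real.exp_neg,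
    Matrix.vecHead, Matrix.vecTail,
    (by rw [two_mul, Real.exp_add]; ring : Real.exp (2 * x 0) = Real.exp (x 0) ^ 2)]
  try ring

lemma T1212 (a : ℝ) (ha : 0 < a) (x : Pt 4) :
    tach2 (godel a) (ricci (godel a)) x 1 2 1 2 = a^2 * Real.exp (x 0) ^ 2 := by
  simp [tach2, godel, ricci_godel a ha, cS, kS, Real.exp_neg,
    Matrix.vecHead, Matrix.vecTail,
    (by rw [two_mul, Real.exp_add]; ring : Real.exp (2 * x 0) = Real.exp (x 0) ^ 2)]
  try ring

end GodelAux

open GodelAux in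
/-- The Gödel spacetime is not Ricci-pseudosymmetric: at every point
the (0,4)-tensors `R·S` and `Q(g,S)` are linearly independent; in particular there
is no real number `L` with `R·S = L·Q(g,S)` at any point. -/
theorem godel_not_ricci_pseudosymmetric (a : ℝ) (ha : 0 < a) :
    (∀ x : Pt 4, LinearIndependent ℝ
      ![dot42 (godel a) (riemann (godel a)) (ricci (godel a)) x,
        tach2 (godel a) (ricci (godel a)) x]) ∧
    (∀ x : Pt 4, ¬ ∃ L : ℝ, ∀ i j l m : Fin 4,
        dot42 (godel a) (riemann (godel a)) (ricci (godel a)) x i j l m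
          = L * tach2 (godel a) (ricci (godel a)) x i j l m) := by
  have hexp : ∀ x : Pt 4, Real.exp (x 0) ^ 2 ≠ 0 := fun x => pow_ne_zero _ (Real.exp_ne_zero _)
  have ha2 : a ^ 2 ≠ 0 := pow_ne_zero _ (ne_of_gt ha)
  constructor
  · intro x
    rw [LinearIndependent.pair_iff]
    intro s t hst
    have h1 := congrFun (congrFun (congrFun (congrFun hst 1) 2) 1) 2
    have h2 := congrFun (congrFun (congrFun (congrFun hst 0) 1) 0) 1
    simp only [Pi.add_apply, Pi.smul_apply, smul_eq_mul, Pi.zero_apply,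
      D0101 a ha x, D1212 a ha x, T0101 a ha x, T1212 a ha x] at h1 h2
    have ht : t = 0 := by
      have h := h1
      simp only [mul_zero, zero_add] at h
      rcases mul_eq_zero.mp h with h' | h'
      · exact h'
      · exact absurd h' (mul_ne_zero ha2 (hexp x))
    subst ht
    refine ⟨?_, rfl⟩
    have h := h2
    simp only [zero_mul, add_zero, mul_neg, neg_zero] at h
    rcases mul_eq_zero.mp h with h' | h'
    · exact h'
    · exact absurd (by linarith [h'] : Real.exp (x 0) ^ 2 = 0) (hexp x)
  · rintro x ⟨L, hL⟩
    have h1 := hL 1 2 1 2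
    have h2 := hL 0 1 0 1
    rw [D1212 a ha x, T1212 a ha x] at h1
    rw [D0101 a ha x, T0101 a ha x] at h2
    have hL0 : L = 0 := by
      rcases mul_eq_zero.mp h1.symm with h | h
      · exact h
      · exact absurd h (mul_ne_zero ha2 (hexp x))
    rw [hL0] at h2
    simp only [zero_mul] at h2
    exact absurd (by linarith [h2] : Real.exp (x 0) ^ 2 = 0) (hexp x)
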